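/- Let B ∈ ℝ^{p×m}, b : ℝ^q → ℝ^p, f : ℝ^m → ℝ, g : ℝ^q → ℝ, and let R ∈ ℝ^{p×p} be symmetric positive definite. Let (u†, x†, y†) satisfy b(u†) + B x† = 0, g(u†) + (y†)ᵀ b(u†) ≤ g(u) + (y†)ᵀ b(u) for all u, and f(x†) + (y†)ᵀ B x† ≤ f(x) + (y†)ᵀ B x for all x. Define r^j = b(u^j) + B x^j and V^j = ‖y^j − y†‖²_{R⁻¹} + ‖B(x^j − x†)‖²_R + ‖r^j‖²_R. Suppose the sequence (u^j, x^j, y^j)_{j≥0} satisfies, for every j ≥ 0: (i) y^{j+1} = y^j + R r^{j+1}; (ii) g(u^{j+1}) + (y^{j+1} + R B (x^j − x^{j+1}))ᵀ b(u^{j+1}) ≤ g(ζ) + (y^{j+1} + R B (x^j − x^{j+1}))ᵀ b(ζ) for all ζ ∈ ℝ^q; (iii) f(x^j) + (y^j)ᵀ B x^j ≤ f(ξ) + (y^j)ᵀ B ξ for all ξ ∈ ℝ^m. Then the sequence (V^j) is nonincreasing, Σ_{j=0}^{∞} (‖r^j‖²_R + ‖B(x^{j+1} − x^j)‖²_R)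 ≤ V^0, and r^j → 0 and B(x^{j+1} − x^j) → 0 as j → ∞. -/

import Mathlib

open Matrix Filter

lemma symm_dot' {p : ℕ} {R : Matrix (Fin p) (Fin p) ℝ} (hs : Rᵀ = R)
    (v w : Fin p → ℝ) : R.mulVec v ⬝ᵥ w = v ⬝ᵥ R.mulVec w := by
  rw [Matrix.dotProduct_mulVec, ← Matrix.mulVec_transpose, hs]

lemma posdef_nonneg' {p : ℕ} {R : Matrix (Fin p) (Fin p) ℝ} (hR : R.PosDef)
    (v : Fin p → ℝ) : 0 ≤ v ⬝ᵥ R.mulVec v := by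
  simpa using hR.posSemidef.dotProduct_mulVec_nonneg v

lemma transpose_eq_self {p : ℕ} {R : Matrix (Fin p) (Fin p) ℝ} (hR : R.PosDef) : Rᵀ = R := by
  rw [← Matrix.conjTranspose_eq_transpose_of_trivial]; exact hR.1

open scoped MatrixOrder in
lemma tendsto_of_quad {pp : ℕ} {R : Matrix (Fin pp) (Fin pp) ℝ} (hR : R.PosDef)
    (w : ℕ → Fin pp → ℝ)
    (h : Tendsto (fun j => w j ⬝ᵥ R.mulVec (w j)) atTop (nhds 0)) :
    Tendsto w atTop (nhds 0) := by
  classical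
  set S := CFC.sqrt R with hSdef
  have hSS : S * S = R := CFC.sqrt_mul_sqrt_self R hR.posSemidef.nonneg
  have hSt : Sᵀ = S := by
    rw [← Matrix.conjTranspose_eq_transpose_of_trivial]
    exact (CFC.sqrt_nonneg R).posSemidef.1
  have hq : ∀ v : Fin pp → ℝ, v ⬝ᵥ R.mulVec v = (S.mulVec v) ⬝ᵥ (S.mulVec v) := by
    intro v
    rw [← hSS, ← Matrix.mulVec_mulVec]
    exact (symm_dot' hSt v (S.mulVec v)).symm
  have h2 : Tendsto (fun j => (S.mulVec (w j)) ⬝ᵥ (S.mulVec (w j))) atTop (nhds 0) := by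
    simpa [hq] using h
  have hcomp : Tendsto (fun j => S.mulVec (w j)) atTop (nhds 0) := by
    rw [tendsto_pi_nhds]
    intro i
    have hsq : Tendsto (fun j => (S.mulVec (w j) i)^2) atTop (nhds 0) := by
      apply squeeze_zero (fun j => sq_nonneg _) _ h2
      intro j
      have : (S.mulVec (w j)) ⬝ᵥ (S.mulVec (w j)) = ∑ k, (S.mulVec (w j) k)^2 := by
        simp [dotProduct, sq]
      rw [this]
      exact Finset.single_le_sum (f := fun k => (S.mulVec (w j) k)^2) (fun k _ => sq_nonneg _) (Finset.mem_univ i)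
    have habs : Tendsto (fun j => |S.mulVec (w j) i|) atTop (nhds 0) := by
      have := (Real.continuous_sqrt.tendsto 0).comp hsq
      simpa [Function.comp_def, Real.sqrt_sq_eq_abs] using this
    exact squeeze_zero_norm (fun j => le_of_eq (Real.norm_eq_abs _)) habs
  have hdet : IsUnit S.det := by
    have : S.det * S.det = R.det := by rw [← Matrix.det_mul, hSS]
    have hRdet : R.det ≠ 0 := hR.det_pos.ne'
    have : S.det ≠ 0 := fun h0 => hRdet (by rw [← this, h0, mul_zero])
    exact this.isUnit
  have hinv : ∀ v : Fin pp → ℝ, S⁻¹.mulVec (S.mulVec v) = v := by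
    intro v
    rw [Matrix.mulVec_mulVec, Matrix.nonsing_inv_mul S hdet, Matrix.one_mulVec]
  have hcont : Continuous fun z : Fin pp → ℝ => S⁻¹.mulVec z :=
    continuous_const.matrix_mulVec continuous_id
  have := (hcont.tendsto 0).comp hcomp
  simp only [Function.comp_def] at this
  simpa [hinv, Matrix.mulVec_zero] using this

/-- ADMM convergence. Under the saddle hypotheses on
`(u†, x†, y†)` and the iteration hypotheses (i)–(iii), the Lyapunov sequence
`V^j = ‖y^j − y†‖²_{R⁻¹} + ‖B(x^j − x†)‖²_R + ‖r^j‖²_R` is nonincreasing,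
`Σ_j (‖r^j‖²_R + ‖B(x^{j+1} − x^j)‖²_R) ≤ V^0`, and `r^j → 0`,
`B(x^{j+1} − x^j) → 0`. -/
theorem stmt8 {p m q : ℕ} (B : Matrix (Fin p) (Fin m) ℝ)
    (b : (Fin q → ℝ) → Fin p → ℝ) (f : (Fin m → ℝ) → ℝ) (g : (Fin q → ℝ) → ℝ)
    (R : Matrix (Fin p) (Fin p) ℝ) (hR : R.PosDef)
    (udag : Fin q → ℝ) (xdag : Fin m → ℝ) (ydag : Fin p → ℝ)
    (hfeas : b udag + B.mulVec xdag = 0)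
    (hgdag : ∀ u : Fin q → ℝ, g udag + ydag ⬝ᵥ b udag ≤ g u + ydag ⬝ᵥ b u)
    (hfdag : ∀ x : Fin m → ℝ,
      f xdag + ydag ⬝ᵥ B.mulVec xdag ≤ f x + ydag ⬝ᵥ B.mulVec x)
    (u : ℕ → Fin q → ℝ) (x : ℕ → Fin m → ℝ) (y : ℕ → Fin p → ℝ)
    (r : ℕ → Fin p → ℝ) (hr : ∀ j, r j = b (u j) + B.mulVec (x j))
    (V : ℕ → ℝ)
    (hV : ∀ j, V j = (y j - ydag) ⬝ᵥ R⁻¹.mulVec (y j - ydag)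
      + B.mulVec (x j - xdag) ⬝ᵥ R.mulVec (B.mulVec (x j - xdag))
      + r j ⬝ᵥ R.mulVec (r j))
    (h1 : ∀ j, y (j+1) = y j + R.mulVec (r (j+1)))
    (h2 : ∀ (j : ℕ) (ζ : Fin q → ℝ),
      g (u (j+1)) + (y (j+1) + R.mulVec (B.mulVec (x j - x (j+1)))) ⬝ᵥ b (u (j+1)) ≤
        g ζ + (y (j+1) + R.mulVec (B.mulVec (x j - x (j+1)))) ⬝ᵥ b ζ)
    (h3 : ∀ (j : ℕ) (ξ : Fin m → ℝ),
      f (x j) + y j ⬝ᵥ B.mulVec (x j) ≤ f ξ + y j ⬝ᵥ B.mulVec ξ) :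
    Antitone V ∧
    (∑' j : ℕ, (r j ⬝ᵥ R.mulVec (r j)
      + B.mulVec (x (j+1) - x j) ⬝ᵥ R.mulVec (B.mulVec (x (j+1) - x j)))) ≤ V 0 ∧
    Tendsto r atTop (nhds 0) ∧
    Tendsto (fun j => B.mulVec (x (j+1) - x j)) atTop (nhds 0) := by
  classical
  have hRt : Rᵀ = R := transpose_eq_self hR
  have hdetR : IsUnit R.det := hR.det_pos.ne'.isUnit
  have hsymmR : ∀ v w : Fin p → ℝ, R.mulVec v ⬝ᵥ w = v ⬝ᵥ R.mulVec w := symm_dot' hRt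
  have hRinvR : ∀ v : Fin p → ℝ, R⁻¹.mulVec (R.mulVec v) = v := by
    intro v
    rw [Matrix.mulVec_mulVec, Matrix.nonsing_inv_mul R hdetR, Matrix.one_mulVec]
  have hRRinv : ∀ v : Fin p → ℝ, R.mulVec (R⁻¹.mulVec v) = v := by
    intro v
    rw [Matrix.mulVec_mulVec, Matrix.mul_nonsing_inv R hdetR, Matrix.one_mulVec]
  -- symmetry of the R-form
  have hsym2 : ∀ v w : Fin p → ℝ, v ⬝ᵥ R.mulVec w = w ⬝ᵥ R.mulVec v := by
    intro v w
    rw [← hsymmR w v, dotProduct_comm]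
  -- the key decrement inequality
  have hdec : ∀ j, V (j+1) + (r j ⬝ᵥ R.mulVec (r j)
      + B.mulVec (x (j+1) - x j) ⬝ᵥ R.mulVec (B.mulVec (x (j+1) - x j))) ≤ V j := by
    intro j
    have hbu : b (u (j+1)) = r (j+1) - B.mulVec (x (j+1)) := by rw [hr (j+1)]; abel
    have hbd : b udag = -(B.mulVec xdag) := eq_neg_of_add_eq_zero_left hfeas
    have I1 := hgdag (u (j+1))
    have I2 := hfdag (x (j+1))
    have I3 := h2 j udag
    have I4 := h3 (j+1) xdag
    have I5 := h3 (j+1) (x j)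
    have I6 := h3 j (x (j+1))
    rw [hbu, hbd] at I1 I3
    rw [h1 j] at I3 I4 I5
    rw [hV j, hV (j+1), h1 j]
    simp only [Matrix.mulVec_sub, Matrix.mulVec_add, Matrix.mulVec_neg, dotProduct_add,
      dotProduct_sub, dotProduct_neg, add_dotProduct, sub_dotProduct, neg_dotProduct,
      hRinvR, hRRinv, hsymmR] at I1 I2 I3 I4 I5 I6 ⊢
    linarith [hsym2 (B.mulVec (x j)) (B.mulVec (x (j+1))),
      hsym2 (B.mulVec (x j)) (B.mulVec xdag),
      hsym2 (B.mulVec (x (j+1))) (B.mulVec xdag),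
      hsym2 (B.mulVec (x j)) (r (j+1)),
      hsym2 (B.mulVec (x (j+1))) (r (j+1)),
      dotProduct_comm (r (j+1)) (y j),
      dotProduct_comm (r (j+1)) ydag,
      dotProduct_comm (y j) ydag,
      symm_dot' (transpose_eq_self hR.inv) (y j) ydag,
      hRinvR (y j), hRinvR ydag]
  have hVnonneg : ∀ j, 0 ≤ V j := by
    intro j
    rw [hV j]
    have h1' := posdef_nonneg' hR.inv (y j - ydag)
    have h2' := posdef_nonneg' hR (B.mulVec (x j - xdag))
    have h3' := posdef_nonneg' hR (r j)
    linarith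
  have hDnonneg : ∀ j, 0 ≤ r j ⬝ᵥ R.mulVec (r j)
      + B.mulVec (x (j+1) - x j) ⬝ᵥ R.mulVec (B.mulVec (x (j+1) - x j)) := by
    intro j
    exact add_nonneg (posdef_nonneg' hR _) (posdef_nonneg' hR _)
  have hanti : Antitone V := by
    apply antitone_nat_of_succ_le
    intro j
    have := hdec j
    have := hDnonneg j
    linarith
  have hpartial : ∀ n, ∑ i ∈ Finset.range n, (r i ⬝ᵥ R.mulVec (r i)
      + B.mulVec (x (i+1) - x i) ⬝ᵥ R.mulVec (B.mulVec (x (i+1) - x i))) ≤ V 0 := by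
    intro n
    have hle : ∑ i ∈ Finset.range n, (r i ⬝ᵥ R.mulVec (r i)
        + B.mulVec (x (i+1) - x i) ⬝ᵥ R.mulVec (B.mulVec (x (i+1) - x i)))
        ≤ ∑ i ∈ Finset.range n, (V i - V (i+1)) := by
      apply Finset.sum_le_sum
      intro i _
      have := hdec i
      linarith
    rw [Finset.sum_range_sub' V n] at hle
    have := hVnonneg n
    linarith
  have hsummable : Summable (fun j => r j ⬝ᵥ R.mulVec (r j)
      + B.mulVec (x (j+1) - x j) ⬝ᵥ R.mulVec (B.mulVec (x (j+1) - x j))) :=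
    summable_of_sum_range_le hDnonneg hpartial
  have htsum := Real.tsum_le_of_sum_range_le hDnonneg hpartial
  have hDto0 := hsummable.tendsto_atTop_zero
  have hr0 : Tendsto (fun j => r j ⬝ᵥ R.mulVec (r j)) atTop (nhds 0) :=
    squeeze_zero (fun j => posdef_nonneg' hR _)
      (fun j => le_add_of_nonneg_right (posdef_nonneg' hR _)) hDto0
  have hd0 : Tendsto (fun j => B.mulVec (x (j+1) - x j)
      ⬝ᵥ R.mulVec (B.mulVec (x (j+1) - x j))) atTop (nhds 0) :=
    squeeze_zero (fun j => posdef_nonneg' hR _)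
      (fun j => le_add_of_nonneg_left (posdef_nonneg' hR _)) hDto0
  exact ⟨hanti, htsum, tendsto_of_quad hR r hr0, tendsto_of_quad hR _ hd0⟩
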